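/- Let x ∈ ℝⁿ satisfy |x| weakly sub-majorized by (δ, 1+δ, …, n−1+δ) with δ ∈ {0, 1/2, 1}. Suppose each |x_j| ≥ 1 is reduced by 1 and each |x_j| < 1 is reduced to 0; i.e., define x′_j = max(|x_j| − 1, 0) for j ∈ S ⊆ [n] with |S| = n − 1. Then (x′_j)_{j∈S} is weakly sub-majorized by (δ, 1+δ, …, n−2+δ) ∈ ℝ^{n−1}. -/

import Mathlib

open Finset

/-- `u` is weakly sub-majorized by `v`. -/
def WeakSubMaj {α β : Type*} [Fintype α] [Fintype β] (u : α → ℝ) (v : β → ℝ) : Prop :=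
  ∀ S : Finset α, ∃ T : Finset β, T.card = S.card ∧ ∑ i ∈ S, u i ≤ ∑ j ∈ T, v j

lemma gauss_real (k : ℕ) : ∑ j ∈ Finset.range k, (j : ℝ) = k * (k - 1) / 2 := by
  induction k with
  | zero => simp
  | succ n ih => rw [Finset.sum_range_succ, ih]; push_cast; ring

lemma le_of_strictMono_nat {k : ℕ} {f : Fin k → ℕ} (hf : StrictMono f) :
    ∀ i : Fin k, (i : ℕ) ≤ f i := by
  rintro ⟨i, hi⟩
  induction i with
  | zero => exact Nat.zero_le _
  | succ j ih =>
    have hj : j < k := Nat.lt_of_succ_lt hi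
    have h1 := ih hj
    have h2 : f ⟨j, hj⟩ < f ⟨j + 1, hi⟩ := hf (by simp [Fin.lt_def])
    simpa using Nat.lt_of_le_of_lt h1 h2

/-- Lower bound: a finset of `Fin n` of cardinality `k` has element sum at least
`k(k-1)/2`. -/
lemma sum_lower {n : ℕ} (T : Finset (Fin n)) :
    (T.card : ℝ) * (T.card - 1) / 2 ≤ ∑ i ∈ T, (i : ℝ) := by
  set k := T.card with hk
  set f := T.orderEmbOfFin hk.symm with hfdef
  have himg : Finset.image (fun i : Fin k => f i) Finset.univ = T := by
    ext a
    simp only [Finset.mem_image, Finset.mem_univ, true_and]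
    constructor
    · rintro ⟨i, rfl⟩; exact T.orderEmbOfFin_mem hk.symm i
    · intro ha
      have : a ∈ Set.range f := by rw [Finset.range_orderEmbOfFin]; exact ha
      obtain ⟨i, hi⟩ := this; exact ⟨i, hi⟩
  have hsum : ∑ i ∈ T, (i : ℝ) = ∑ i : Fin k, ((f i : ℕ) : ℝ) := by
    rw [← himg, Finset.sum_image]
    intro a _ b _ hab
    exact f.injective hab
  have hmono : StrictMono (fun i : Fin k => (f i : ℕ)) :=
    fun a b hab => f.strictMono hab
  have hle : ∀ i : Fin k, ((i : ℕ) : ℝ) ≤ ((f i : ℕ) : ℝ) := by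
    intro i; exact_mod_cast le_of_strictMono_nat hmono i
  have h1 : ∑ i : Fin k, ((i : ℕ) : ℝ) ≤ ∑ i : Fin k, ((f i : ℕ) : ℝ) :=
    Finset.sum_le_sum fun i _ => hle i
  have h2 : ∑ i : Fin k, ((i : ℕ) : ℝ) = (k : ℝ) * (k - 1) / 2 := by
    rw [Fin.sum_univ_eq_sum_range, gauss_real]
  rw [hsum]; linarith

/-- Upper bound: a finset of `Fin n` of cardinality `m` has element sum at most
`m*n - m(m+1)/2`. -/
lemma sum_upper {n : ℕ} (T : Finset (Fin n)) :
    ∑ i ∈ T, (i : ℝ) ≤ (T.card : ℝ) * n - T.card * (T.card + 1) / 2 := by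
  have hcompl := sum_lower Tᶜ
  have hle : T.card ≤ n := by simpa using Finset.card_le_card (Finset.subset_univ T)
  have hcard : (Tᶜ.card : ℝ) = (n : ℝ) - T.card := by
    rw [Finset.card_compl, Fintype.card_fin, Nat.cast_sub hle]
  have hsplit : ∑ i ∈ T, (i : ℝ) + ∑ i ∈ Tᶜ, (i : ℝ) = ∑ i : Fin n, (i : ℝ) := by
    rw [Finset.sum_add_sum_compl]
  have htot : ∑ i : Fin n, (i : ℝ) = (n : ℝ) * (n - 1) / 2 := by
    rw [Fin.sum_univ_eq_sum_range, gauss_real]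
  have hler : (T.card : ℝ) ≤ n := by exact_mod_cast hle
  rw [hcard] at hcompl
  nlinarith [hcompl, hsplit, htot]

/-- The "top block" of `Fin M` with `k` elements: its elements sum (with offset `δ`)
to exactly `k(M-k) + k(k-1)/2 + kδ`. -/
lemma top_block (M k : ℕ) (hk : k ≤ M) (δ : ℝ) :
    ∃ T : Finset (Fin M), T.card = k ∧
      ∑ i ∈ T, ((i : ℝ) + δ) = (k : ℝ) * (M - k) + k * (k - 1) / 2 + k * δ := by
  have hf : ∀ j : Fin k, M - k + (j : ℕ) < M := fun j => by omega
  refine ⟨Finset.univ.map ⟨fun j : Fin k => (⟨M - k + j, hf j⟩ : Fin M), ?_⟩, ?_, ?_⟩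
  · intro a b hab
    have : M - k + (a : ℕ) = M - k + b := congrArg Fin.val hab
    exact Fin.ext (by omega)
  · simp
  · rw [Finset.sum_map]
    have : ∀ j : Fin k, ((((⟨M - k + j, hf j⟩ : Fin M)) : ℝ) + δ)
        = ((M : ℝ) - k) + (j : ℕ) + δ := by
      intro j
      have : ((M - k + (j : ℕ) : ℕ) : ℝ) = (M : ℝ) - k + (j : ℕ) := by
        rw [Nat.cast_add, Nat.cast_sub hk]
      simp only [Function.Embedding.coeFn_mk]
      rw [show (((⟨M - k + (j : ℕ), hf j⟩ : Fin M)) : ℝ) = ((M - k + (j : ℕ) : ℕ) : ℝ) from rfl,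
        this]
    show ∑ j ∈ (Finset.univ : Finset (Fin k)), ((((⟨M - k + j, hf j⟩ : Fin M)) : ℝ) + δ) = _
    rw [Finset.sum_congr rfl (fun j _ => this j), Finset.sum_add_distrib,
      Finset.sum_add_distrib]
    simp only [Finset.sum_const, Finset.card_univ, Fintype.card_fin, nsmul_eq_mul,
      Fin.sum_univ_eq_sum_range, gauss_real]

/-- Key inductive step of the Coxeter Havel–Hakimi algorithm (Case 1b): if
`|x| ≼_w (δ, 1+δ, …, n-1+δ)`, `S ⊆ [n]` has `n - 1` elements, and
`x'_j = max(|x_j| - 1, 0)` for `j ∈ S`, then `x' ≼_w (δ, 1+δ, …, n-2+δ)`. -/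
theorem reduced_weakSubMaj
    (n : ℕ) (δ : ℝ) (hδ : δ = 0 ∨ δ = 1/2 ∨ δ = 1)
    (x : Fin n → ℝ)
    (hmaj : WeakSubMaj (fun i => |x i|) (fun i : Fin n => (i : ℝ) + δ))
    (S : Finset (Fin n)) (hS : S.card = n - 1) :
    WeakSubMaj (fun j : {j // j ∈ S} => max (|x j.1| - 1) 0)
      (fun i : Fin (n - 1) => (i : ℝ) + δ) := by
  have hδ0 : 0 ≤ δ := by rcases hδ with h | h | h <;> rw [h] <;> norm_num
  intro A
  have hkle : A.card ≤ n - 1 := by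
    calc A.card ≤ Fintype.card {j // j ∈ S} := Finset.card_le_univ A
    _ = S.card := Fintype.card_coe S
    _ = n - 1 := hS
  set k := A.card with hk
  obtain ⟨T', hT'card, hT'sum⟩ := top_block (n - 1) k hkle δ
  refine ⟨T', by rw [hT'card], ?_⟩
  -- split A by whether |x j| ≥ 1
  have hsplit : ∑ j ∈ A, max (|x j.1| - 1) 0
      = ∑ j ∈ A.filter (fun j => 1 ≤ |x j.1|), (|x j.1| - 1) := by
    rw [← Finset.sum_filter_add_sum_filter_not A (fun j => 1 ≤ |x j.1|)]
    have h1 : ∑ j ∈ A.filter (fun j => 1 ≤ |x j.1|), max (|x j.1| - 1) 0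
        = ∑ j ∈ A.filter (fun j => 1 ≤ |x j.1|), (|x j.1| - 1) := by
      apply Finset.sum_congr rfl
      intro j hj
      rw [Finset.mem_filter] at hj
      rw [max_eq_left]; linarith [hj.2]
    have h2 : ∑ j ∈ A.filter (fun j => ¬ 1 ≤ |x j.1|), max (|x j.1| - 1) 0 = 0 := by
      apply Finset.sum_eq_zero
      intro j hj
      rw [Finset.mem_filter] at hj
      rw [max_eq_right]; push_neg at hj; linarith [hj.2]
    rw [h1, h2, add_zero]
  set Ap := A.filter (fun j => 1 ≤ |x j.1|) with hAp
  set B := Ap.image (fun j => j.1) with hB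
  have hinj : ∀ a ∈ Ap, ∀ b ∈ Ap, a.1 = b.1 → a = b := fun a _ b _ h => Subtype.ext h
  have hBcard : B.card = Ap.card := Finset.card_image_of_injOn hinj
  have hBsum : ∑ i ∈ B, |x i| = ∑ j ∈ Ap, |x j.1| := Finset.sum_image hinj
  set m := Ap.card with hm
  have hmk : m ≤ k := Finset.card_filter_le A _
  -- apply hmaj to B
  obtain ⟨T, hTcard, hTsum⟩ := hmaj B
  have hTub : ∑ i ∈ T, ((i : ℝ) + δ) ≤ (m : ℝ) * n - m * (m + 1) / 2 + m * δ := by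
    rw [Finset.sum_add_distrib, Finset.sum_const, hTcard, hBcard]
    have := sum_upper T
    rw [hTcard, hBcard] at this
    simp only [nsmul_eq_mul]
    linarith
  have hBub : ∑ i ∈ B, |x i| ≤ (m : ℝ) * n - m * (m + 1) / 2 + m * δ := le_trans hTsum hTub
  simp only at hT'sum hsplit ⊢
  rw [hsplit, Finset.sum_sub_distrib, Finset.sum_const, ← hm,
    nsmul_eq_mul, mul_one, ← hBsum, hT'sum]
  -- final arithmetic
  have hmr : (m : ℝ) ≤ k := by exact_mod_cast hmk
  rcases Nat.eq_zero_or_pos n with hn0 | hn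
  · -- n = 0: then everything is empty
    subst hn0
    have hBe : B = ∅ := Finset.eq_empty_of_isEmpty B
    have hm0 : m = 0 := by rw [← hBcard, hBe, Finset.card_empty]
    have hk0 : k = 0 := Nat.le_zero.mp hkle
    rw [hBe, hm0, hk0]
    simp
  · have hMr : (((n - 1 : ℕ)) : ℝ) = (n : ℝ) - 1 := by rw [Nat.cast_sub hn]; simp
    have hkr : (k : ℝ) ≤ (n : ℝ) - 1 := by
      rw [← hMr]; exact_mod_cast hkle
    rw [hMr]
    rcases Nat.lt_or_ge m k with hlt | hge
    · have hlt' : (m : ℝ) + 1 ≤ k := by exact_mod_cast hlt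
      nlinarith [hBub, hδ0]
    · have hmk' : (m : ℝ) = k := by exact_mod_cast le_antisymm hmk hge
      rw [hmk']
      rw [hmk'] at hBub
      nlinarith [hBub, hδ0]
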